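/- Theorem 2, equation (14) — quadratic-order equivariance error of the discretized group-convolution layer: Let S be a finite subgroup of O(2), let d ≥ 0, and for each B ∈ S fix coefficients β_B defining transformed operators χ_B^{(A)}. Let M, C, h₀ > 0, let P ⊂ ℤ² be finite, and for each A, B ∈ S and h ∈ (0, h₀] let c^{A,B}_p(h) ∈ ℝ (p ∈ P) be stencil coefficients satisfying: for every g : ℝ² → ℝ that is (d+2) times continuously differentiable with ‖D^j g(z)‖ ≤ M for all z ∈ ℝ² and j ≤ d+2, every A, B ∈ S, x ∈ ℝ², h ∈ (0, h₀], |Σ_{p∈P} c^{A,B}_p(h)·g(x + h·p) − χ_B^{(A)}[g](x)| ≤ C·h². Let e : ℝ² × S → ℝ be such that each e(·, k) is (d+2) times continuously differentiable with ‖D^j e(·,k)(z)‖ ≤ M for all z, k and j ≤ d+2. Then for every Ã, A ∈ S, every x ∈ ℝ² and every h ∈ (0, h₀], |Σ_{B∈S} Σ_{p∈P} c^{A,B}_p(h)·e(Ã⁻¹(x + h·p), Ã⁻¹AB) − Σ_{B∈S} χ_B^{(Ã⁻¹A)}[e(·, Ã⁻¹AB)](Ã⁻¹x)| ≤ |S|·C·h²,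 where |S| is the order of S. That is, the discretized layer applied to the transformed feature map π_Ã[e] agrees with the transformed continuous output π^{Ẽ}_Ã[Φ^S[e]] at (x, A) up to an error of order h². -/

import Mathlib

open scoped InnerProductSpace Matrix


/-- Action of an `n × n` real matrix on `ℝⁿ` (with the Euclidean norm) by
matrix-vector multiplication. -/
noncomputable def mact {n : ℕ} (A : Matrix (Fin n) (Fin n) ℝ) :
    EuclideanSpace ℝ (Fin n) →ₗ[ℝ] EuclideanSpace ℝ (Fin n) :=
  Matrix.toEuclideanLin A

/-- The list of direction vectors `A e₁` repeated `m 1` times, ..., `A eₙ` repeated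
`m n` times, as a function on `Fin (∑ i, m i)` (block `i` consists of copies of `A eᵢ`). -/
noncomputable def dirs {n : ℕ} (A : Matrix (Fin n) (Fin n) ℝ) (m : Fin n → ℕ)
    (j : Fin (∑ i, m i)) : EuclideanSpace ℝ (Fin n) :=
  (((List.finRange n).flatMap fun i =>
      List.replicate (m i) (mact A (EuclideanSpace.single i 1)))).getD j 0

/-- The transformed differential operator
`χ^{(A)}[r](x) = ∑_{|m| ≤ d} β_m · D^{|m|} r(x)[A e₁ repeated m₁ times, …, A eₙ repeated mₙ times]`,
where multi-indices `m ∈ ℕⁿ` with `|m| ≤ d` (hence each entry `≤ d`) are encoded as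
functions `Fin n → Fin (d+1)`. -/
noncomputable def chi {n d : ℕ} (β : (Fin n → Fin (d+1)) → ℝ)
    (A : Matrix (Fin n) (Fin n) ℝ)
    (r : EuclideanSpace ℝ (Fin n) → ℝ) (x : EuclideanSpace ℝ (Fin n)) : ℝ :=
  ∑ m : Fin n → Fin (d+1),
    if (∑ i, (m i : ℕ)) ≤ d then
      β m * iteratedFDeriv ℝ (∑ i, (m i : ℕ)) r x (dirs A fun i => (m i : ℕ))
    else 0

/-- The matrix underlying an element of a subgroup `S ≤ O(2)`. -/
noncomputable def matS {S : Subgroup ↥(Matrix.orthogonalGroup (Fin 2) ℝ)}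
    (A : S) : Matrix (Fin 2) (Fin 2) ℝ :=
  ((A : ↥(Matrix.orthogonalGroup (Fin 2) ℝ)) : Matrix (Fin 2) (Fin 2) ℝ)

/-- The grid point `p ∈ ℤ²` as a point of the Euclidean plane. -/
noncomputable def gridpt (p : ℤ × ℤ) : EuclideanSpace ℝ (Fin 2) :=
  WithLp.toLp 2 ![(p.1 : ℝ), (p.2 : ℝ)]

lemma mact_mul {n : ℕ} (A B : Matrix (Fin n) (Fin n) ℝ) (v : EuclideanSpace ℝ (Fin n)) :
    mact (A * B) v = mact A (mact B v) := by
  simp [mact, Matrix.toEuclideanLin_apply, Matrix.mulVec_mulVec]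

lemma mact_norm {n : ℕ} (A : Matrix (Fin n) (Fin n) ℝ)
    (hA : A ∈ Matrix.orthogonalGroup (Fin n) ℝ) (v : EuclideanSpace ℝ (Fin n)) :
    ‖mact A v‖ = ‖v‖ := by
  have h1 : Aᵀ * A = 1 := by
    have := (Matrix.mem_orthogonalGroup_iff' (Fin n) ℝ).mp hA
    simpa [Matrix.star_eq_conjTranspose] using this
  have key : ⟪mact A v, mact A v⟫_ℝ = ⟪v, v⟫_ℝ := by
    simp only [mact, Matrix.toEuclideanLin_apply, PiLp.inner_apply, RCLike.inner_apply,
      starRingEnd_apply, star_trivial]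
    have hd : ∀ (u w : Fin n → ℝ), (∑ i, u i * w i) = u ⬝ᵥ w := fun u w => rfl
    rw [hd, hd]
    set u : Fin n → ℝ := (WithLp.equiv 2 _) v with hu
    calc (A *ᵥ u) ⬝ᵥ (A *ᵥ u) = (A *ᵥ u) ᵥ* A ⬝ᵥ u := by rw [Matrix.dotProduct_mulVec]
      _ = ((u ᵥ* Aᵀ) ᵥ* A) ⬝ᵥ u := by rw [Matrix.vecMul_transpose]
      _ = (u ᵥ* (Aᵀ * A)) ⬝ᵥ u := by rw [Matrix.vecMul_vecMul]
      _ = u ⬝ᵥ u := by rw [h1, Matrix.vecMul_one]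
  have := congrArg Real.sqrt key
  rwa [← norm_eq_sqrt_real_inner, ← norm_eq_sqrt_real_inner] at this

noncomputable def oIso {n : ℕ} (A : ↥(Matrix.orthogonalGroup (Fin n) ℝ)) :
    EuclideanSpace ℝ (Fin n) ≃ₗᵢ[ℝ] EuclideanSpace ℝ (Fin n) where
  toLinearEquiv := LinearEquiv.ofLinear (mact (A : Matrix (Fin n) (Fin n) ℝ))
    (mact ((A⁻¹ : ↥(Matrix.orthogonalGroup (Fin n) ℝ)) : Matrix (Fin n) (Fin n) ℝ))
    (by ext v; rw [LinearMap.comp_apply, ← mact_mul]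
        norm_cast
        simp [mact, Matrix.toEuclideanLin_apply])
    (by ext v; rw [LinearMap.comp_apply, ← mact_mul]
        norm_cast
        simp [mact, Matrix.toEuclideanLin_apply])
  norm_map' := mact_norm _ A.2

lemma getD_map_zero {α β : Type*} (f : α → β) (z : α)
    (l : List α) (j : ℕ) : (l.map f).getD j (f z) = f (l.getD j z) := by
  by_cases h : j < l.length
  · rw [List.getD_eq_getElem _ _ (by simpa using h), List.getD_eq_getElem _ _ h,
      List.getElem_map]
  · rw [List.getD_eq_default _ _ (by simpa using not_lt.mp h),
      List.getD_eq_default _ _ (not_lt.mp h)]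

lemma dirs_map {n : ℕ} (N A : Matrix (Fin n) (Fin n) ℝ) (m : Fin n → ℕ) (j : Fin (∑ i, m i)) :
    mact N (dirs A m j) = dirs (N * A) m j := by
  unfold dirs
  have hmap : ((List.finRange n).flatMap fun i =>
      List.replicate (m i) (mact (N * A) (EuclideanSpace.single i 1))) =
      (((List.finRange n).flatMap fun i =>
        List.replicate (m i) (mact A (EuclideanSpace.single i 1)))).map (mact N) := by
    rw [List.map_flatMap]
    congr 1
    funext i
    rw [List.map_replicate, mact_mul]
  rw [hmap]
  have := getD_map_zero (α := EuclideanSpace ℝ (Fin n)) (β := EuclideanSpace ℝ (Fin n))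
    (fun v => mact N v) 0 (((List.finRange n).flatMap fun i =>
      List.replicate (m i) (mact A (EuclideanSpace.single i 1)))) j
  simpa using this.symm

lemma chi_comp {n d : ℕ} (β : (Fin n → Fin (d+1)) → ℝ)
    (N A : Matrix (Fin n) (Fin n) ℝ) (f : EuclideanSpace ℝ (Fin n) → ℝ)
    (hf : ContDiff ℝ ((d + 2 : ℕ) : ℕ∞) f) (x : EuclideanSpace ℝ (Fin n)) :
    chi β A (fun y => f (mact N y)) x = chi β (N * A) f (mact N x) := by
  unfold chi
  apply Finset.sum_congr rfl
  intro m _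
  by_cases hm : (∑ i, (m i : ℕ)) ≤ d
  · rw [if_pos hm, if_pos hm]
    congr 1
    set clm := LinearMap.toContinuousLinearMap (mact N) with hclm
    have hcomp : (fun y => f (mact N y)) = f ∘ clm := rfl
    rw [hcomp, ContinuousLinearMap.iteratedFDeriv_comp_right clm hf x
      (by exact_mod_cast hm.trans (Nat.le_add_right d 2))]
    rw [ContinuousMultilinearMap.compContinuousLinearMap_apply]
    have : clm x = mact N x := rfl
    rw [this]
    congr 1
    funext j
    exact dirs_map N A _ j
  · rw [if_neg hm, if_neg hm]

/-- Theorem 2, equation (14): quadratic-order equivariance error of the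
discretized group-convolution layer.  Assume the stencils `c^{A,B}_p(h)` (supported on
the finite set `P ⊂ ℤ²`) approximate the operators `χ_B^{(A)}` (built from the
coefficients `β B`) with error `≤ C·h²` uniformly over functions with derivatives of
order `≤ d+2` bounded by `M` and over `h ∈ (0, h₀]`.  Then for a feature map `e` whose
channels satisfy these bounds, the discretized layer applied to `π_Ã[e]` agrees with
`π^Ẽ_Ã[Φ^S[e]](x, A) = ∑_{B∈S} χ_B^{(Ã⁻¹A)}[e(·, Ã⁻¹AB)](Ã⁻¹x)` up to `|S|·C·h²`. -/
theorem discretized_Phi_equivariance_error {d : ℕ}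
    (S : Subgroup ↥(Matrix.orthogonalGroup (Fin 2) ℝ)) [Fintype S]
    (β : S → (Fin 2 → Fin (d+1)) → ℝ) (M C h₀ : ℝ) (hM : 0 < M) (hC : 0 < C)
    (hh₀ : 0 < h₀) (P : Finset (ℤ × ℤ)) (c : S → S → ℤ × ℤ → ℝ → ℝ)
    (hcons : ∀ g : EuclideanSpace ℝ (Fin 2) → ℝ, ContDiff ℝ ((d + 2 : ℕ) : ℕ∞) g →
      (∀ z, ∀ j ≤ d + 2, ‖iteratedFDeriv ℝ j g z‖ ≤ M) →
      ∀ A B : S, ∀ x : EuclideanSpace ℝ (Fin 2), ∀ h : ℝ, 0 < h → h ≤ h₀ →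
        |(∑ p ∈ P, c A B p h * g (x + h • gridpt p)) - chi (β B) (matS A) g x|
          ≤ C * h ^ 2)
    (e : EuclideanSpace ℝ (Fin 2) → S → ℝ)
    (he : ∀ k : S, ContDiff ℝ ((d + 2 : ℕ) : ℕ∞) (fun x => e x k))
    (hbd : ∀ k : S, ∀ z, ∀ j ≤ d + 2, ‖iteratedFDeriv ℝ j (fun x => e x k) z‖ ≤ M) :
    ∀ Atil A : S, ∀ x : EuclideanSpace ℝ (Fin 2), ∀ h : ℝ, 0 < h → h ≤ h₀ →
      |(∑ B : S, ∑ p ∈ P,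
            c A B p h * e (mact (matS Atil⁻¹) (x + h • gridpt p)) (Atil⁻¹ * (A * B)))
          - ∑ B : S, chi (β B) (matS (Atil⁻¹ * A)) (fun y => e y (Atil⁻¹ * A * B))
              (mact (matS Atil⁻¹) x)|
        ≤ (Fintype.card S : ℝ) * C * h ^ 2 := by
  intro Atil A x h hpos hle
  set N : Matrix (Fin 2) (Fin 2) ℝ := matS Atil⁻¹ with hN
  have hterm : ∀ B : S,
      |(∑ p ∈ P, c A B p h * e (mact N (x + h • gridpt p)) (Atil⁻¹ * (A * B)))
        - chi (β B) (matS (Atil⁻¹ * A)) (fun y => e y (Atil⁻¹ * A * B)) (mact N x)|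
        ≤ C * h ^ 2 := by
    intro B
    set k : S := Atil⁻¹ * (A * B) with hk
    set g : EuclideanSpace ℝ (Fin 2) → ℝ := fun y => e (mact N y) k with hg
    have hcd : ContDiff ℝ ((d + 2 : ℕ) : ℕ∞) g := by
      have : g = (fun y => e y k) ∘ (LinearMap.toContinuousLinearMap (mact N)) := rfl
      rw [this]
      exact (he k).comp (LinearMap.toContinuousLinearMap (mact N)).contDiff
    have hgb : ∀ z, ∀ j ≤ d + 2, ‖iteratedFDeriv ℝ j g z‖ ≤ M := by
      intro z j hj
      have hiso : g = (fun y => e y k) ∘ (oIso (Atil⁻¹ : S)) := rfl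
      rw [hiso, LinearIsometryEquiv.norm_iteratedFDeriv_comp_right]
      exact hbd k _ j hj
    have key := hcons g hcd hgb A B x h hpos hle
    have hchi : chi (β B) (matS A) g x
        = chi (β B) (matS (Atil⁻¹ * A)) (fun y => e y (Atil⁻¹ * A * B)) (mact N x) := by
      have hmm : matS (Atil⁻¹ * A) = N * matS A := rfl
      have hk' : Atil⁻¹ * A * B = k := by rw [hk, mul_assoc]
      rw [hmm, hk']
      exact chi_comp (β B) N (matS A) (fun y => e y k) (he k) x
    rw [← hchi]
    exact key
  have hsplit : (∑ B : S, ∑ p ∈ P,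
        c A B p h * e (mact N (x + h • gridpt p)) (Atil⁻¹ * (A * B)))
      - ∑ B : S, chi (β B) (matS (Atil⁻¹ * A)) (fun y => e y (Atil⁻¹ * A * B)) (mact N x)
      = ∑ B : S, ((∑ p ∈ P, c A B p h * e (mact N (x + h • gridpt p)) (Atil⁻¹ * (A * B)))
          - chi (β B) (matS (Atil⁻¹ * A)) (fun y => e y (Atil⁻¹ * A * B)) (mact N x)) := by
    rw [Finset.sum_sub_distrib]
  rw [hsplit]
  calc |∑ B : S, _| ≤ ∑ B : S, |(∑ p ∈ P, c A B p h * e (mact N (x + h • gridpt p)) (Atil⁻¹ * (A * B)))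
          - chi (β B) (matS (Atil⁻¹ * A)) (fun y => e y (Atil⁻¹ * A * B)) (mact N x)| :=
        Finset.abs_sum_le_sum_abs _ _
    _ ≤ ∑ _B : S, C * h ^ 2 := Finset.sum_le_sum fun B _ => hterm B
    _ = (Fintype.card S : ℝ) * C * h ^ 2 := by
        rw [Finset.sum_const, Finset.card_univ, nsmul_eq_mul, mul_assoc]
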